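/- If two rooted trees (T,r) and (T',r') are isomorphic, then they satisfy the level-label condition: L(T_i) = L(T'_i) as multisets for every i = 0, 1, ..., max(height(T), height(T')). -/

import Mathlib

attribute [local instance] Classical.propDecidable

namespace AHU

variable {V : Type*}

/-- The height of the rooted tree `(G, r)`: maximum distance from the root. -/
noncomputable def height (G : SimpleGraph V) [Fintype V] (r : V) : ℕ :=
  Finset.univ.sup fun v => G.dist r v

/-- The level of a vertex: height minus distance from the root. -/
noncomputable def lvl (G : SimpleGraph V) [Fintype V] (r : V) (v : V) : ℕ :=
  height G r - G.dist r v

/-- `T_i`: the set of vertices at level `i`. -/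
noncomputable def levelSet (G : SimpleGraph V) [Fintype V] (r : V) (i : ℕ) : Finset V :=
  Finset.univ.filter fun v => lvl G r v = i

/-- A vertex is a leaf if it has degree at most one. -/
def IsLeaf (G : SimpleGraph V) (v : V) : Prop :=
  {u | G.Adj v u}.ncard ≤ 1

/-- The parent of `v ≠ r`: the unique neighbour of `v` lying closer to the root
(on the unique path from `r` to `v`).  For `v = r` we return `v` itself. -/
noncomputable def parent (G : SimpleGraph V) (r v : V) : V :=
  if h : ∃ p, G.Adj p v ∧ G.dist r p + 1 = G.dist r v then h.choose else v

/-- The set of children of `u`. -/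
noncomputable def children (G : SimpleGraph V) [Fintype V] (r u : V) : Finset V :=
  Finset.univ.filter fun v => v ≠ r ∧ parent G r v = u

/-- The label-compression of a finite set `S` of tuples: the unique order isomorphism
from `(S, ≤lex)` onto `{0, …, |S| - 1}`, i.e. `s ↦ #{t ∈ S | t <lex s}`. -/
noncomputable def compress (S : Finset (List ℕ)) (s : List ℕ) : ℕ :=
  (S.filter fun t => List.Lex (· < ·) t s).card

/-- Auxiliary, level-indexed version of the compressed descendant labeling:
`labelAt G r i v` is the label of a vertex `v` of level `i`. -/
noncomputable def labelAt (G : SimpleGraph V) [Fintype V] (r : V) : ℕ → V → List ℕ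
  | 0, _ => []
  | (i + 1), v =>
      if IsLeaf G v then []
      else
        Multiset.sort
          ((children G r v).val.map fun u =>
            compress ((levelSet G r i).image (labelAt G r i)) (labelAt G r i u)) (· ≤ ·)

/-- The compressed descendant labeling `cdl : V(T) → ℕ*`. -/
noncomputable def cdl (G : SimpleGraph V) [Fintype V] (r : V) (v : V) : List ℕ :=
  labelAt G r (lvl G r v) v

/-- `𝓛(W)`: the multiset of compressed descendant labels of the vertices of `W`. -/
noncomputable def labels (G : SimpleGraph V) [Fintype V] (r : V) (W : Finset V) :
    Multiset (List ℕ) :=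
  W.val.map (cdl G r)

/-- The level-label condition: the multisets of labels agree on every level
`i = 0, 1, …, max(height T, height T')`. -/
noncomputable def LevelLabelCondition {V' : Type*} (G : SimpleGraph V) [Fintype V] (r : V)
    (G' : SimpleGraph V') [Fintype V'] (r' : V') : Prop :=
  ∀ i ≤ max (height G r) (height G' r' ),
    labels G r (levelSet G r i) = labels G' r' (levelSet G' r' i)



section IsoTransfer

variable {V V' : Type*} [Fintype V] [Fintype V']

lemma dist_iso (G : SimpleGraph V) (G' : SimpleGraph V') (φ : G ≃g G')
    (hc : G.Connected) (hc' : G'.Connected) (u v : V) :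
    G'.dist (φ u) (φ v) = G.dist u v := by
  apply le_antisymm
  · obtain ⟨w, hw⟩ := hc.exists_walk_length_eq_dist u v
    calc G'.dist (φ u) (φ v) ≤ (w.map φ.toHom).length := SimpleGraph.dist_le _
    _ = G.dist u v := by rw [SimpleGraph.Walk.length_map, hw]
  · obtain ⟨w, hw⟩ := hc'.exists_walk_length_eq_dist (φ u) (φ v)
    have := SimpleGraph.dist_le
      ((w.map φ.symm.toHom).copy (φ.symm_apply_apply u) (φ.symm_apply_apply v))
    simpa [hw] using this

lemma parent_unique (G : SimpleGraph V) (hT : G.IsTree) {r v p q : V}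
    (hp : G.Adj p v ∧ G.dist r p + 1 = G.dist r v)
    (hq : G.Adj q v ∧ G.dist r q + 1 = G.dist r v) : p = q := by
  have hc := hT.isConnected
  obtain ⟨wp, hwp⟩ := hc.exists_walk_length_eq_dist r p
  obtain ⟨wq, hwq⟩ := hc.exists_walk_length_eq_dist r q
  have hdq : G.dist r q = G.dist r p := by omega
  set Wp := wp.concat hp.1 with hWp
  set Wq := wq.concat hq.1 with hWq
  have hWplen : Wp.length = G.dist r v := by
    rw [hWp, SimpleGraph.Walk.length_concat, hwp]; exact hp.2
  have hWqlen : Wq.length = G.dist r v := by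
    rw [hWq, SimpleGraph.Walk.length_concat, hwq]; exact hq.2
  have hPp : Wp.IsPath := Wp.isPath_of_length_eq_dist hWplen
  have hPq : Wq.IsPath := Wq.isPath_of_length_eq_dist hWqlen
  have hEq : Wp = Wq := by
    obtain ⟨P, -, hPuniq⟩ := hT.existsUnique_path r v
    rw [hPuniq _ hPp, hPuniq _ hPq]
  have h1 : Wp.getVert (G.dist r p) = p := by
    rw [hWp, SimpleGraph.Walk.concat_eq_append, SimpleGraph.Walk.getVert_append]
    simp [hwp]
  have h2 : Wq.getVert (G.dist r p) = q := by
    rw [hWq, SimpleGraph.Walk.concat_eq_append, SimpleGraph.Walk.getVert_append]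
    simp [hwq, hdq]
  rw [← h1, ← h2, hEq]

lemma parent_root (G : SimpleGraph V) (r : V) : parent G r r = r := by
  rw [parent, dif_neg]
  rintro ⟨p, -, hp⟩
  simp [SimpleGraph.dist_self] at hp

lemma parent_spec (G : SimpleGraph V) (hT : G.IsTree) {r v : V} (hv : v ≠ r) :
    G.Adj (parent G r v) v ∧ G.dist r (parent G r v) + 1 = G.dist r v := by
  have hc := hT.isConnected
  have hd : G.dist r v ≠ 0 := by
    have := hc.pos_dist_of_ne (Ne.symm hv)
    omega
  have hex : ∃ p, G.Adj p v ∧ G.dist r p + 1 = G.dist r v := by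
    obtain ⟨w, hw⟩ := hc.exists_walk_length_eq_dist r v
    have hnn : ¬ w.reverse.Nil := by
      rw [SimpleGraph.Walk.nil_iff_length_eq]
      simp [hw, hd]
    obtain ⟨u, h, q, hq⟩ := SimpleGraph.Walk.not_nil_iff.mp hnn
    refine ⟨u, h.symm, ?_⟩
    have hqlen : q.length + 1 = G.dist r v := by
      have : w.reverse.length = G.dist r v := by simp [hw]
      rw [hq] at this
      simpa using this
    have hle : G.dist r u ≤ q.length := by
      have := SimpleGraph.dist_le q.reverse
      simpa using this
    have hge : G.dist r v ≤ G.dist r u + 1 := by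
      obtain ⟨s, hs⟩ := hc.exists_walk_length_eq_dist r u
      have := SimpleGraph.dist_le (s.concat h.symm)
      rwa [SimpleGraph.Walk.length_concat, hs] at this
    omega
  rw [parent, dif_pos hex]
  exact hex.choose_spec

variable {G : SimpleGraph V} {G' : SimpleGraph V'} {φ : G ≃g G'}
  {r : V} {r' : V'}

lemma dist_root_iso (hT : G.IsTree) (hT' : G'.IsTree) (hroot : φ r = r') (v : V) : G'.dist r' (φ v) = G.dist r v := by
  rw [← hroot]
  exact dist_iso G G' φ hT.isConnected hT'.isConnected r v

lemma parent_iso (hT : G.IsTree) (hT' : G'.IsTree) (hroot : φ r = r') (v : V) : parent G' r' (φ v) = φ (parent G r v) := by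
  by_cases hv : v = r
  · subst hv; rw [parent_root, hroot, parent_root]
  · have hv' : (φ v : V') ≠ r' := by
      rw [← hroot]
      exact fun h => hv (φ.injective h)
    have h1 := parent_spec G' hT' hv'
    have h2 := parent_spec G hT (r := r) hv
    refine parent_unique G' hT' h1 ⟨φ.map_adj_iff.mpr h2.1, ?_⟩
    rw [dist_root_iso hT hT' hroot, dist_root_iso hT hT' hroot]
    exact h2.2

lemma height_iso (hT : G.IsTree) (hT' : G'.IsTree) (hroot : φ r = r') : height G' r' = height G r := by
  unfold height
  apply le_antisymm
  · apply Finset.sup_le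
    intro v' _
    have : G'.dist r' v' = G.dist r (φ.symm v') := by
      rw [← dist_root_iso hT hT' hroot, φ.apply_symm_apply]
    rw [this]
    exact Finset.le_sup (Finset.mem_univ _)
  · apply Finset.sup_le
    intro v _
    rw [← dist_root_iso hT hT' hroot]
    exact Finset.le_sup (Finset.mem_univ _)

lemma lvl_iso (hT : G.IsTree) (hT' : G'.IsTree) (hroot : φ r = r') (v : V) : lvl G' r' (φ v) = lvl G r v := by
  unfold lvl
  rw [height_iso hT hT' hroot, dist_root_iso hT hT' hroot]

lemma levelSet_iso (hT : G.IsTree) (hT' : G'.IsTree) (hroot : φ r = r') (i : ℕ) :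
    levelSet G' r' i = (levelSet G r i).image φ := by
  ext v'
  simp only [levelSet, Finset.mem_filter, Finset.mem_univ, true_and, Finset.mem_image]
  constructor
  · intro h
    refine ⟨φ.symm v', ?_, φ.apply_symm_apply v'⟩
    rw [← lvl_iso hT hT' hroot, φ.apply_symm_apply]
    exact h
  · rintro ⟨v, hv, rfl⟩
    rw [lvl_iso hT hT' hroot]
    exact hv

lemma isLeaf_iso (v : V) : IsLeaf G' (φ v) ↔ IsLeaf G v := by
  unfold IsLeaf
  have : {u | G'.Adj (φ v) u} = φ '' {u | G.Adj v u} := by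
    ext u'
    simp only [Set.mem_setOf_eq, Set.mem_image]
    constructor
    · intro h
      refine ⟨φ.symm u', ?_, φ.apply_symm_apply u'⟩
      have := φ.symm.map_adj_iff.mpr h
      rwa [φ.symm_apply_apply] at this
    · rintro ⟨u, hu, rfl⟩
      exact φ.map_adj_iff.mpr hu
  rw [this, Set.ncard_image_of_injective _ φ.injective]

lemma children_iso (hT : G.IsTree) (hT' : G'.IsTree) (hroot : φ r = r') (v : V) :
    children G' r' (φ v) = (children G r v).image φ := by
  ext u'
  simp only [children, Finset.mem_filter, Finset.mem_univ, true_and, Finset.mem_image]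
  constructor
  · rintro ⟨h1, h2⟩
    refine ⟨φ.symm u', ⟨?_, ?_⟩, φ.apply_symm_apply u'⟩
    · intro h
      apply h1
      rw [← φ.apply_symm_apply u', h, hroot]
    · apply φ.injective
      rw [← parent_iso hT hT' hroot, φ.apply_symm_apply]
      exact h2
  · rintro ⟨u, ⟨hu1, hu2⟩, rfl⟩
    refine ⟨?_, ?_⟩
    · rw [← hroot]
      exact fun h => hu1 (φ.injective h)
    · rw [parent_iso hT hT' hroot, hu2]

lemma labelAt_iso (hT : G.IsTree) (hT' : G'.IsTree) (hroot : φ r = r') : ∀ (i : ℕ) (v : V), labelAt G' r' i (φ v) = labelAt G r i v := by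
  intro i
  induction i with
  | zero => intro v; rfl
  | succ i ih =>
    intro v
    simp only [labelAt]
    by_cases hL : IsLeaf G v
    · rw [if_pos hL, if_pos ((isLeaf_iso (φ := φ) v).mpr hL)]
    · rw [if_neg hL, if_neg (fun h => hL ((isLeaf_iso (φ := φ) v).mp h))]
      have himg : (levelSet G' r' i).image (labelAt G' r' i)
          = (levelSet G r i).image (labelAt G r i) := by
        rw [levelSet_iso hT hT' hroot, Finset.image_image]
        exact Finset.image_congr fun v _ => ih v
      have hch : (children G' r' (φ v)).val = (children G r v).val.map φ := by
        rw [children_iso hT hT' hroot]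
        exact Finset.image_val_of_injOn φ.injective.injOn
      rw [hch, Multiset.map_map]
      congr 1
      apply Multiset.map_congr rfl
      intro u _
      simp only [Function.comp_apply]
      rw [himg, ih u]

lemma cdl_iso (hT : G.IsTree) (hT' : G'.IsTree) (hroot : φ r = r') (v : V) : cdl G' r' (φ v) = cdl G r v := by
  unfold cdl
  rw [lvl_iso hT hT' hroot, labelAt_iso hT hT' hroot]

end IsoTransfer

/-- If two rooted trees are isomorphic, then they satisfy the level-label condition. -/
theorem levelLabelCondition_of_iso {V V' : Type*} [Fintype V] [Fintype V']
    (G : SimpleGraph V) (r : V) (G' : SimpleGraph V') (r' : V')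
    (hT : G.IsTree) (hT' : G'.IsTree) (φ : G ≃g G') (hroot : φ r = r') :
    LevelLabelCondition G r G' r' := by
  intro i _
  unfold labels
  rw [levelSet_iso hT hT' hroot,
    Finset.image_val_of_injOn φ.injective.injOn, Multiset.map_map]
  exact (Multiset.map_congr rfl fun v _ => cdl_iso hT hT' hroot v).symm

end AHU
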